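/- Let σ_i > 0 and let P = [p_{i,j}]_{i,j=1}^N be a substochastic matrix (p_{i,j} ≥ 0, Σ_{j=0}^N p_{i,j} = 1 with p_{i,0} ≥ 0) that is irreducible and has p_{i,0} > 0 for at least one i, and let c_i^− > 0, c_{i,j} > 0. Define d_i = −Σ_{j≠i} c_{i,j} σ_i p_{i,j} (e_j − e_i) + c_i^− σ_i p_{i,0} e_i. Then the vectors d_1, …, d_N are linearly independent. -/

import Mathlib

open Finset

/-- linear independence of the Jackson network constraint
directions d_i = −Σ_{j≠i} c_{i,j} σ_i p_{i,j}(e_j − e_i) + c_i^− σ_i p_{i,0} e_i,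
for an irreducible substochastic routing matrix with p_{i,0} > 0 for some i and
positive multipliers. -/
theorem jackson_directions_linearIndependent {N : ℕ}
    (σ cm : Fin N → ℝ) (c p : Fin N → Fin N → ℝ) (p0 : Fin N → ℝ)
    (hσ : ∀ i, 0 < σ i) (hcm : ∀ i, 0 < cm i) (hc : ∀ i j, 0 < c i j)
    (hp : ∀ i j, 0 ≤ p i j) (hp0 : ∀ i, 0 ≤ p0 i)
    (hrow : ∀ i, p0 i + ∑ j, p i j = 1)
    (hirr : ∀ i j : Fin N, Relation.TransGen (fun i j => 0 < p i j) i j)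
    (hexit : ∃ i, 0 < p0 i) :
    LinearIndependent ℝ (fun i : Fin N =>
      (fun k => if k = i
          then cm i * σ i * p0 i + ∑ j ∈ Finset.univ.erase i, c i j * σ i * p i j
          else -(c i k * σ i * p i k) : Fin N → ℝ)) := by
  rw [Fintype.linearIndependent_iff]
  intro g hg
  set w : Fin N → Fin N → ℝ := fun i k => c i k * σ i * p i k with hwdef
  have hwnn : ∀ i k, 0 ≤ w i k := fun i k =>
    mul_nonneg (mul_nonneg (hc i k).le (hσ i).le) (hp i k)
  set e : Fin N → ℝ := fun i => cm i * σ i * p0 i with hedef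
  have henn : ∀ i, 0 ≤ e i := fun i =>
    mul_nonneg (mul_nonneg (hcm i).le (hσ i).le) (hp0 i)
  set γ : Fin N → ℝ := fun i => e i + ∑ j ∈ univ.erase i, w i j with hγdef
  have hγnn : ∀ i, 0 ≤ γ i := fun i =>
    add_nonneg (henn i) (Finset.sum_nonneg fun j _ => hwnn i j)
  -- the basic linear relation at each coordinate k
  have heq : ∀ k, g k * γ k = ∑ i ∈ univ.erase k, w i k * g i := by
    intro k
    have h := congrFun hg k
    simp only [Finset.sum_apply, Pi.smul_apply, Pi.zero_apply, smul_eq_mul] at h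
    rw [← Finset.sum_erase_add _ _ (Finset.mem_univ k)] at h
    simp only [if_pos rfl] at h
    have h2 : ∑ i ∈ univ.erase k, g i * (if k = i then γ i else -(w i k))
        = -∑ i ∈ univ.erase k, w i k * g i := by
      rw [← Finset.sum_neg_distrib]
      refine Finset.sum_congr rfl fun i hi => ?_
      have : k ≠ i := fun h => (Finset.mem_erase.mp hi).1 h.symm
      rw [if_neg this]; ring
    rw [h2] at h
    simp only [if_true, hwdef, hγdef, hedef] at h ⊢
    linarith [h]
  -- absolute value bound
  set T : Fin N → ℝ := fun k => ∑ i ∈ univ.erase k, w i k * |g i| with hTdef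
  have hb : ∀ k, |g k| * γ k ≤ T k := by
    intro k
    calc |g k| * γ k = |g k * γ k| := by rw [abs_mul, abs_of_nonneg (hγnn k)]
      _ = |∑ i ∈ univ.erase k, w i k * g i| := by rw [heq k]
      _ ≤ ∑ i ∈ univ.erase k, |w i k * g i| := Finset.abs_sum_le_sum_abs _ _
      _ = T k := by
          refine Finset.sum_congr rfl fun i _ => ?_
          rw [abs_mul, abs_of_nonneg (hwnn i k)]
  -- swap sums
  have hswap : ∑ k, T k = ∑ i, |g i| * (γ i - e i) := by
    have h1 : ∀ k, T k = (∑ i, w i k * |g i|) - w k k * |g k| := fun k =>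
      Finset.sum_erase_eq_sub (Finset.mem_univ k)
    have h2 : ∀ i, (∑ k ∈ univ.erase i, w i k * |g i|)
        = (∑ k, w i k * |g i|) - w i i * |g i| := fun i =>
      Finset.sum_erase_eq_sub (Finset.mem_univ i)
    have h3 : ∀ i, |g i| * (γ i - e i) = ∑ k ∈ univ.erase i, w i k * |g i| := by
      intro i
      simp only [hγdef]
      rw [add_sub_cancel_left, Finset.mul_sum]
      exact Finset.sum_congr rfl fun k _ => by ring
    simp_rw [h1, h3, h2]
    rw [Finset.sum_sub_distrib, Finset.sum_sub_distrib, Finset.sum_comm]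
  -- total inequality forces equality everywhere
  have hkey : (∀ k, |g k| * γ k = T k) ∧ (∀ i, |g i| * e i = 0) := by
    have hsum : ∑ k, |g k| * γ k ≤ ∑ k, T k := Finset.sum_le_sum fun k _ => hb k
    have hsum2 : ∑ k, T k = ∑ i, |g i| * γ i - ∑ i, |g i| * e i := by
      rw [hswap, ← Finset.sum_sub_distrib]
      exact Finset.sum_congr rfl fun i _ => by ring
    have he0 : ∑ i, |g i| * e i ≤ 0 := by linarith
    have he0' : ∀ i, |g i| * e i = 0 := by
      have : ∑ i, |g i| * e i = 0 :=
        le_antisymm he0 (Finset.sum_nonneg fun i _ => mul_nonneg (abs_nonneg _) (henn i))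
      intro i
      have := (Finset.sum_eq_zero_iff_of_nonneg
        (fun i _ => mul_nonneg (abs_nonneg (g i)) (henn i))).mp this i (Finset.mem_univ i)
      exact this
    have hTsum : ∑ k, T k = ∑ k, |g k| * γ k := by
      rw [hsum2]
      have : ∑ i, |g i| * e i = 0 := Finset.sum_eq_zero fun i _ => he0' i
      rw [this]; ring
    constructor
    · intro k
      have : ∑ k, (T k - |g k| * γ k) = 0 := by
        rw [Finset.sum_sub_distrib, hTsum]; ring
      have h := (Finset.sum_eq_zero_iff_of_nonneg
        (fun k _ => sub_nonneg.mpr (hb k))).mp this k (Finset.mem_univ k)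
      linarith
    · exact he0'
  obtain ⟨hTeq, hge⟩ := hkey
  -- propagation step: if p i k > 0 and g k = 0 then g i = 0
  have hstep : ∀ i k : Fin N, 0 < p i k → g k = 0 → g i = 0 := by
    intro i k hpik hgk
    by_cases hik : i = k
    · rw [hik]; exact hgk
    · have hT0 : T k = 0 := by rw [← hTeq k, hgk, abs_zero, zero_mul]
      have := (Finset.sum_eq_zero_iff_of_nonneg
        (fun j _ => mul_nonneg (hwnn j k) (abs_nonneg (g j)))).mp hT0 i
        (Finset.mem_erase.mpr ⟨hik, Finset.mem_univ i⟩)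
      have hwpos : 0 < w i k := mul_pos (mul_pos (hc i k) (hσ i)) hpik
      have : |g i| = 0 := by
        rcases mul_eq_zero.mp this with h | h
        · exact absurd h (ne_of_gt hwpos)
        · exact h
      exact abs_eq_zero.mp this
  -- exit node is zero
  obtain ⟨i0, hi0⟩ := hexit
  have hg0 : g i0 = 0 := by
    have := hge i0
    have he : 0 < e i0 := mul_pos (mul_pos (hcm i0) (hσ i0)) hi0
    rcases mul_eq_zero.mp this with h | h
    · exact abs_eq_zero.mp h
    · exact absurd h (ne_of_gt he)
  -- propagate along paths
  intro i
  have hpath := hirr i i0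
  induction hpath using Relation.TransGen.head_induction_on with
  | single h => exact hstep _ _ h hg0
  | head h' _ ihc => exact hstep _ _ h' ihc
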